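/- Let S be a random walk with S_0 = 0 and i.i.d. increments, and suppose for constants λ₂ > λ₁ > 0 and C > 0 we have g(x) ≤ C x^{λ₁} and h(x,y) ≤ C/(1+x+y)^{λ₂} for x, y ≥ 0. Then with a_n = e^{−S_n}, B_{1,n} = Σ_{k=1}^{n−1} e^{−S_k}, and τ(n) the first minimum time, for all 0 ≤ j ≤ n: E[g(a_n) h(a_n, B_{1,n}); τ(n) = j] ≤ C² E[e^{(λ₂−λ₁)S_j}; τ(j) = j] · E[e^{−λ₁ S_{n−j}}; L_{n−j} ≥ 0]. -/

import Mathlib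

open MeasureTheory ProbabilityTheory

noncomputable def firstMin {Ω : Type*} (S : ℕ → Ω → ℝ) (n : ℕ) (ω : Ω) : ℕ :=
  sInf {k | k ≤ n ∧ ∀ m ≤ n, S k ω ≤ S m ω}

lemma firstMin_eq_iff {Ω : Type*} (S : ℕ → Ω → ℝ) (n j : ℕ) (hj : j ≤ n) (ω : Ω) :
    firstMin S n ω = j ↔ (∀ k < j, S j ω < S k ω) ∧ ∀ k ≤ n, S j ω ≤ S k ω := by
  have hne : {k | k ≤ n ∧ ∀ m ≤ n, S k ω ≤ S m ω}.Nonempty := by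
    obtain ⟨k, hk, hmin⟩ := Finset.exists_min_image (Finset.range (n+1)) (fun k => S k ω)
      ⟨0, by simp⟩
    exact ⟨k, by simpa [Nat.lt_succ_iff] using hk,
      fun m hm => hmin m (by simp [Nat.lt_succ_iff, hm])⟩
  constructor
  · intro hfm
    unfold firstMin at hfm
    have hjmem : j ∈ {k | k ≤ n ∧ ∀ m ≤ n, S k ω ≤ S m ω} := hfm ▸ Nat.sInf_mem hne
    refine ⟨fun k hk => ?_, hjmem.2⟩
    have hknot : k ∉ {k | k ≤ n ∧ ∀ m ≤ n, S k ω ≤ S m ω} :=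
      Nat.notMem_of_lt_sInf (by rw [hfm]; exact hk)
    have hkn : k ≤ n := le_trans hk.le hj
    have hnot : ¬ ∀ m ≤ n, S k ω ≤ S m ω := fun hall => hknot ⟨hkn, hall⟩
    push_neg at hnot
    obtain ⟨m, hm, hlt⟩ := hnot
    exact lt_of_le_of_lt (hjmem.2 m hm) hlt
  · rintro ⟨h1, h2⟩
    unfold firstMin
    have hjmem : j ∈ {k | k ≤ n ∧ ∀ m ≤ n, S k ω ≤ S m ω} := ⟨hj, h2⟩
    refine le_antisymm (Nat.sInf_le hjmem) ?_
    by_contra hlt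
    push_neg at hlt
    have hmem := Nat.sInf_mem hne
    exact absurd (hmem.2 j hj) (not_le.2 (h1 _ hlt))

lemma firstMin_self_iff {Ω : Type*} (S : ℕ → Ω → ℝ) (j : ℕ) (ω : Ω) :
    firstMin S j ω = j ↔ ∀ k < j, S j ω < S k ω := by
  rw [firstMin_eq_iff S j j le_rfl]
  refine ⟨fun h => h.1, fun h1 => ⟨h1, fun k hk => ?_⟩⟩
  rcases hk.lt_or_eq with h | h
  · exact (h1 k h).le
  · rw [h]

lemma map_tuple_pi {Ω : Type*} [MeasurableSpace Ω] {μ : Measure Ω} [IsProbabilityMeasure μ]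
    (X : ℕ → Ω → ℝ) (hmeas : ∀ i, Measurable (X i))
    (hindep : iIndepFun X μ)
    (m : ℕ) (c : Fin m → ℕ) (hc : Function.Injective c) :
    μ.map (fun ω (i : Fin m) => X (c i) ω) = Measure.pi (fun i => μ.map (X (c i))) := by
  classical
  haveI : ∀ i : Fin m, IsProbabilityMeasure (μ.map (X (c i))) :=
    fun i => Measure.isProbabilityMeasure_map (hmeas (c i)).aemeasurable
  symm
  refine Measure.pi_eq fun s hs => ?_
  have hVmeas : Measurable (fun ω (i : Fin m) => X (c i) ω) :=
    measurable_pi_lambda _ fun i => hmeas (c i)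
  rw [Measure.map_apply hVmeas (MeasurableSet.univ_pi hs)]
  set sets : ℕ → Set ℝ :=
    fun nn => ⋂ i ∈ Finset.univ.filter (fun i : Fin m => c i = nn), s i with hsets
  have hsets_c : ∀ i, sets (c i) = s i := by
    intro i
    have hfil : Finset.univ.filter (fun i' : Fin m => c i' = c i) = {i} := by
      ext i'; simp [hc.eq_iff]
    simp only [hsets]
    rw [hfil]
    simp
  have hpre : (fun ω (i : Fin m) => X (c i) ω) ⁻¹' Set.pi Set.univ s
      = ⋂ nn ∈ Finset.image c Finset.univ, X nn ⁻¹' sets nn := by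
    ext ω
    simp only [Set.mem_preimage, Set.mem_pi, Set.mem_univ, forall_true_left, Set.mem_iInter,
      Finset.mem_image, Finset.mem_univ, true_and]
    constructor
    · rintro H nn ⟨i, rfl⟩
      rw [hsets_c i]
      exact H i
    · intro H i
      have := H (c i) ⟨i, rfl⟩
      rwa [hsets_c i] at this
  have hmul := hindep.measure_inter_preimage_eq_mul (sets := sets) (Finset.image c Finset.univ)
    (fun nn _ => MeasurableSet.biInter (Set.to_countable _) fun i _ => hs i)
  rw [hpre, hmul]
  rw [Finset.prod_image (fun i _ i' _ h => hc h)]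
  refine Finset.prod_congr rfl fun i _ => ?_
  rw [hsets_c i, Measure.map_apply (hmeas (c i)) (hs i)]

lemma map_shift_eq {Ω : Type*} [MeasurableSpace Ω] {μ : Measure Ω} [IsProbabilityMeasure μ]
    (X : ℕ → Ω → ℝ) (hmeas : ∀ i, Measurable (X i))
    (hindep : iIndepFun X μ)
    (hident : ∀ i, IdentDistrib (X i) (X 0) μ μ) (m j : ℕ) :
    μ.map (fun ω (i : Fin m) => X (j + i) ω) = μ.map (fun ω (i : Fin m) => X i ω) := by
  rw [map_tuple_pi X hmeas hindep m (fun i => j + (i : ℕ))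
      (fun a b hab => by
        have hab' : j + (a : ℕ) = j + (b : ℕ) := hab
        exact Fin.val_injective (by omega)),
    map_tuple_pi X hmeas hindep m (fun i => (i : ℕ)) Fin.val_injective]
  congr 1
  funext i
  rw [(hident (j + (i : ℕ))).map_eq, ← (hident (i : ℕ)).map_eq]

theorem gh_first_min_bound
    {Ω : Type*} [MeasurableSpace Ω] {μ : Measure Ω} [IsProbabilityMeasure μ]
    (X : ℕ → Ω → ℝ) (hmeas : ∀ i, Measurable (X i))
    (hindep : iIndepFun X μ)
    (hident : ∀ i, IdentDistrib (X i) (X 0) μ μ)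
    (S : ℕ → Ω → ℝ) (hS : ∀ k ω, S k ω = ∑ j ∈ Finset.range k, X j ω)
    (lam₁ lam₂ C : ℝ) (h0 : 0 < lam₁) (h12 : lam₁ < lam₂) (hC : 0 < C)
    (g : ℝ → ℝ) (hg0 : ∀ x, 0 ≤ x → 0 ≤ g x)
    (hg : ∀ x : ℝ, 0 ≤ x → g x ≤ C * x ^ lam₁)
    (h : ℝ → ℝ → ℝ) (hh0 : ∀ x y, 0 ≤ x → 0 ≤ y → 0 ≤ h x y)
    (hh : ∀ x y : ℝ, 0 ≤ x → 0 ≤ y → h x y ≤ C / (1 + x + y) ^ lam₂)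
    (n j : ℕ) (hj : j ≤ n) :
    ∫ ω in {ω | firstMin S n ω = j},
        g (Real.exp (-(S n ω))) *
          h (Real.exp (-(S n ω))) (∑ k ∈ Finset.Icc 1 (n - 1), Real.exp (-(S k ω))) ∂μ
      ≤ C ^ 2 *
        ((∫ ω in {ω | firstMin S j ω = j}, Real.exp ((lam₂ - lam₁) * S j ω) ∂μ) *
          (∫ ω in {ω | ∀ k ≤ n - j, 0 ≤ S k ω}, Real.exp (-lam₁ * S (n - j) ω) ∂μ)) := by
  classical
  have hSm : ∀ k, Measurable (S k) := by
    intro k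
    have : S k = fun ω => ∑ i ∈ Finset.range k, X i ω := funext (hS k)
    rw [this]
    exact Finset.measurable_sum _ fun i _ => hmeas i
  have hS0 : ∀ ω, S 0 ω = 0 := fun ω => by rw [hS]; simp
  set m := n - j with hmdef
  have hjm : j + m = n := by omega
  -- the two events
  set A : Set Ω := {ω | ∀ k < j, S j ω < S k ω} with hA
  set B : Set Ω := {ω | ∀ k ≤ m, 0 ≤ S (j + k) ω - S j ω} with hB
  have hAmeas : MeasurableSet A := by
    have hA' : A = ⋂ k ∈ Finset.range j, {ω | S j ω < S k ω} := by
      ext ω; simp [hA]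
    rw [hA']
    exact Finset.measurableSet_biInter _ fun k _ => measurableSet_lt (hSm j) (hSm k)
  have hBmeas : MeasurableSet B := by
    have hB' : B = ⋂ k ∈ Finset.range (m + 1), {ω | 0 ≤ S (j + k) ω - S j ω} := by
      ext ω; simp [hB, Nat.lt_succ_iff]
    rw [hB']
    exact Finset.measurableSet_biInter _ fun k _ =>
      measurableSet_le measurable_const ((hSm (j + k)).sub (hSm j))
  set F : Ω → ℝ := A.indicator (fun ω => Real.exp ((lam₂ - lam₁) * S j ω)) with hF
  set G : Ω → ℝ := B.indicator (fun ω => Real.exp (-lam₁ * (S (j + m) ω - S j ω))) with hG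
  have hFmeas : Measurable F :=
    (Real.measurable_exp.comp (measurable_const.mul (hSm j))).indicator hAmeas
  have hGmeas : Measurable G :=
    (Real.measurable_exp.comp (measurable_const.mul ((hSm (j + m)).sub (hSm j)))).indicator hBmeas
  have hF0 : ∀ ω, 0 ≤ F ω := fun ω => Set.indicator_nonneg (fun _ _ => (Real.exp_pos _).le) ω
  have hG0 : ∀ ω, 0 ≤ G ω := fun ω => Set.indicator_nonneg (fun _ _ => (Real.exp_pos _).le) ω
  have hF1 : ∀ ω, F ω ≤ 1 := by
    intro ω
    by_cases hω : ω ∈ A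
    · have hω' : ∀ k < j, S j ω < S k ω := hω
      rw [hF, Set.indicator_of_mem hω, Real.exp_le_one_iff]
      have hSj : S j ω ≤ 0 := by
        rcases Nat.eq_zero_or_pos j with hj0 | hj0
        · rw [hj0]; exact (hS0 ω).le
        · have := hω' 0 hj0
          rw [hS0 ω] at this
          exact this.le
      exact mul_nonpos_of_nonneg_of_nonpos (by linarith) hSj
    · rw [hF, Set.indicator_of_notMem hω]; norm_num
  have hG1 : ∀ ω, G ω ≤ 1 := by
    intro ω
    by_cases hω : ω ∈ B
    · have hω' : ∀ k ≤ m, 0 ≤ S (j + k) ω - S j ω := hω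
      rw [hG, Set.indicator_of_mem hω, Real.exp_le_one_iff]
      exact mul_nonpos_of_nonpos_of_nonneg (by linarith) (hω' m le_rfl)
    · rw [hG, Set.indicator_of_notMem hω]; norm_num
  have hFint : Integrable F μ := by
    refine (integrable_const (1 : ℝ)).mono' hFmeas.aestronglyMeasurable ?_
    exact Filter.Eventually.of_forall fun ω => by
      rw [Real.norm_eq_abs, abs_of_nonneg (hF0 ω)]; exact hF1 ω
  have hGint : Integrable G μ := by
    refine (integrable_const (1 : ℝ)).mono' hGmeas.aestronglyMeasurable ?_
    exact Filter.Eventually.of_forall fun ω => by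
      rw [Real.norm_eq_abs, abs_of_nonneg (hG0 ω)]; exact hG1 ω
  have hFGint : Integrable (fun ω => F ω * G ω) μ := by
    refine (integrable_const (1 : ℝ)).mono' (hFmeas.mul hGmeas).aestronglyMeasurable ?_
    refine Filter.Eventually.of_forall fun ω => ?_
    rw [Real.norm_eq_abs, abs_of_nonneg (mul_nonneg (hF0 ω) (hG0 ω))]
    exact mul_le_one₀ (hF1 ω) (hG0 ω) (hG1 ω)
  -- pointwise bound on the event
  have key : ∀ ω, firstMin S n ω = j →
      g (Real.exp (-(S n ω))) *
          h (Real.exp (-(S n ω))) (∑ k ∈ Finset.Icc 1 (n - 1), Real.exp (-(S k ω)))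
        ≤ C ^ 2 * (F ω * G ω) := by
    intro ω hω
    obtain ⟨hlt, hle⟩ := (firstMin_eq_iff S n j hj ω).1 hω
    have hωA : ω ∈ A := hlt
    have hωB : ω ∈ B := fun k hk => sub_nonneg.2 (hle (j + k) (by omega))
    rw [hF, hG, Set.indicator_of_mem hωA, Set.indicator_of_mem hωB]
    set x := Real.exp (-(S n ω)) with hx'
    set y := ∑ k ∈ Finset.Icc 1 (n - 1), Real.exp (-(S k ω)) with hy'
    have hx : 0 ≤ x := (Real.exp_pos _).le
    have hy : 0 ≤ y := Finset.sum_nonneg fun k _ => (Real.exp_pos _).le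
    have hgx : g x ≤ C * Real.exp (-(S n ω) * lam₁) := by
      refine (hg x hx).trans_eq ?_
      rw [hx', ← Real.exp_mul]
    have h1xy : Real.exp (-(S j ω)) ≤ 1 + x + y := by
      by_cases hj0 : j = 0
      · rw [hj0, hS0, neg_zero, Real.exp_zero]; linarith
      by_cases hjn : j = n
      · rw [hjn]; linarith
      · have hjmem : j ∈ Finset.Icc 1 (n - 1) := by
          simp only [Finset.mem_Icc]; omega
        have hyl : Real.exp (-(S j ω)) ≤ y :=
          Finset.single_le_sum (f := fun k => Real.exp (-(S k ω)))
            (fun k _ => (Real.exp_pos _).le) hjmem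
        linarith
    have hhxy : h x y ≤ C * Real.exp (lam₂ * S j ω) := by
      refine (hh x y hx hy).trans ?_
      rw [div_le_iff₀ (by positivity)]
      have hpow : Real.exp (-(S j ω) * lam₂) ≤ (1 + x + y) ^ lam₂ := by
        rw [Real.exp_mul]
        exact Real.rpow_le_rpow (Real.exp_pos _).le h1xy (by linarith)
      have hcancel : Real.exp (lam₂ * S j ω) * Real.exp (-(S j ω) * lam₂) = 1 := by
        rw [← Real.exp_add]
        ring_nf
        exact Real.exp_zero
      calc C = C * (Real.exp (lam₂ * S j ω) * Real.exp (-(S j ω) * lam₂)) := by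
              rw [hcancel, mul_one]
        _ = C * Real.exp (lam₂ * S j ω) * Real.exp (-(S j ω) * lam₂) := by ring
        _ ≤ C * Real.exp (lam₂ * S j ω) * (1 + x + y) ^ lam₂ :=
              mul_le_mul_of_nonneg_left hpow (by positivity)
    calc g x * h x y
        ≤ (C * Real.exp (-(S n ω) * lam₁)) * (C * Real.exp (lam₂ * S j ω)) :=
          mul_le_mul hgx hhxy (hh0 x y hx hy) (by positivity)
      _ = C ^ 2 * (Real.exp ((lam₂ - lam₁) * S j ω) *
            Real.exp (-lam₁ * (S (j + m) ω - S j ω))) := by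
          rw [hjm, mul_mul_mul_comm, ← Real.exp_add, ← Real.exp_add, sq]
          congr 1
          ring
  -- measurability of the event
  have hTmeas : MeasurableSet {ω | firstMin S n ω = j} := by
    have hT' : {ω | firstMin S n ω = j}
        = A ∩ ⋂ k ∈ Finset.range (n + 1), {ω | S j ω ≤ S k ω} := by
      ext ω
      rw [Set.mem_setOf_eq, firstMin_eq_iff S n j hj ω]
      simp [hA, Nat.lt_succ_iff]
    rw [hT']
    exact hAmeas.inter
      (Finset.measurableSet_biInter _ fun k _ => measurableSet_le (hSm j) (hSm k))
  -- step 1 : LHS ≤ ∫ C²·F·G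
  have step1 : (∫ ω in {ω | firstMin S n ω = j},
        g (Real.exp (-(S n ω))) *
          h (Real.exp (-(S n ω))) (∑ k ∈ Finset.Icc 1 (n - 1), Real.exp (-(S k ω))) ∂μ)
      ≤ ∫ ω, C ^ 2 * (F ω * G ω) ∂μ := by
    have hle1 : (∫ ω in {ω | firstMin S n ω = j},
          g (Real.exp (-(S n ω))) *
            h (Real.exp (-(S n ω))) (∑ k ∈ Finset.Icc 1 (n - 1), Real.exp (-(S k ω))) ∂μ)
        ≤ ∫ ω in {ω | firstMin S n ω = j}, C ^ 2 * (F ω * G ω) ∂μ := by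
      refine integral_mono_of_nonneg ?_ ((hFGint.const_mul _).restrict) ?_
      · refine Filter.Eventually.of_forall fun ω => ?_
        exact mul_nonneg (hg0 _ (Real.exp_pos _).le)
          (hh0 _ _ (Real.exp_pos _).le (Finset.sum_nonneg fun k _ => (Real.exp_pos _).le))
      · exact (ae_restrict_iff' hTmeas).2 (Filter.Eventually.of_forall fun ω hω => key ω hω)
    refine hle1.trans (setIntegral_le_integral (hFGint.const_mul _) ?_)
    exact Filter.Eventually.of_forall fun ω =>
      mul_nonneg (by positivity) (mul_nonneg (hF0 ω) (hG0 ω))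
  -- the tuple maps and the factor functions
  set U : Ω → (Fin j → ℝ) := fun ω i => X i ω with hU
  set V : Ω → (Fin m → ℝ) := fun ω i => X (j + i) ω with hV
  set q : (Fin j → ℝ) → ℕ → ℝ :=
    fun v k => ∑ i ∈ Finset.range k, if hi : i < j then v ⟨i, hi⟩ else 0 with hq
  set p : (Fin m → ℝ) → ℕ → ℝ :=
    fun v k => ∑ i ∈ Finset.range k, if hi : i < m then v ⟨i, hi⟩ else 0 with hp
  have hqmeas : ∀ k, Measurable fun v => q v k := by
    intro k
    refine Finset.measurable_sum _ fun i _ => ?_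
    by_cases hi : i < j
    · simp only [hq, dif_pos hi]
      exact measurable_pi_apply _
    · simp only [hq, dif_neg hi]
      exact measurable_const
  have hpmeas : ∀ k, Measurable fun v => p v k := by
    intro k
    refine Finset.measurable_sum _ fun i _ => ?_
    by_cases hi : i < m
    · simp only [hp, dif_pos hi]
      exact measurable_pi_apply _
    · simp only [hp, dif_neg hi]
      exact measurable_const
  set ψ₁ : (Fin j → ℝ) → ℝ :=
    fun v => Set.indicator {v | ∀ k < j, q v j < q v k}
      (fun v => Real.exp ((lam₂ - lam₁) * q v j)) v with hψ₁
  set ψ₂ : (Fin m → ℝ) → ℝ :=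
    fun v => Set.indicator {v | ∀ k ≤ m, 0 ≤ p v k}
      (fun v => Real.exp (-lam₁ * p v m)) v with hψ₂
  have hset₁ : MeasurableSet {v : Fin j → ℝ | ∀ k < j, q v j < q v k} := by
    have : {v : Fin j → ℝ | ∀ k < j, q v j < q v k}
        = ⋂ k ∈ Finset.range j, {v | q v j < q v k} := by
      ext v; simp
    rw [this]
    exact Finset.measurableSet_biInter _ fun k _ => measurableSet_lt (hqmeas j) (hqmeas k)
  have hset₂ : MeasurableSet {v : Fin m → ℝ | ∀ k ≤ m, 0 ≤ p v k} := by
    have : {v : Fin m → ℝ | ∀ k ≤ m, 0 ≤ p v k}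
        = ⋂ k ∈ Finset.range (m + 1), {v | 0 ≤ p v k} := by
      ext v; simp [Nat.lt_succ_iff]
    rw [this]
    exact Finset.measurableSet_biInter _ fun k _ => measurableSet_le measurable_const (hpmeas k)
  have hψ₁meas : Measurable ψ₁ :=
    (Real.measurable_exp.comp (measurable_const.mul (hqmeas j))).indicator hset₁
  have hψ₂meas : Measurable ψ₂ :=
    (Real.measurable_exp.comp (measurable_const.mul (hpmeas m))).indicator hset₂
  -- evaluation lemmas
  have hqU : ∀ ω k, k ≤ j → q (U ω) k = S k ω := by
    intro ω k hk
    rw [hS, hq]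
    refine Finset.sum_congr rfl fun i hi => ?_
    have hij : i < j := lt_of_lt_of_le (Finset.mem_range.1 hi) hk
    rw [dif_pos hij]
  have hpV : ∀ ω k, k ≤ m → p (V ω) k = S (j + k) ω - S j ω := by
    intro ω k hk
    have h1 : S (j + k) ω - S j ω = ∑ i ∈ Finset.Ico j (j + k), X i ω := by
      rw [hS, hS, Finset.sum_Ico_eq_sub _ (Nat.le_add_right j k)]
    rw [h1, Finset.sum_Ico_eq_sum_range]
    simp only [Nat.add_sub_cancel_left]
    rw [hp]
    refine Finset.sum_congr rfl fun i hi => ?_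
    have him : i < m := lt_of_lt_of_le (Finset.mem_range.1 hi) hk
    rw [dif_pos him]
  have hpV0 : ∀ ω k, k ≤ m → p (fun i : Fin m => X i ω) k = S k ω := by
    intro ω k hk
    rw [hS, hp]
    refine Finset.sum_congr rfl fun i hi => ?_
    have him : i < m := lt_of_lt_of_le (Finset.mem_range.1 hi) hk
    rw [dif_pos him]
  have hFU : ∀ ω, F ω = ψ₁ (U ω) := by
    intro ω
    have hmem : U ω ∈ {v : Fin j → ℝ | ∀ k < j, q v j < q v k} ↔ ω ∈ A := by
      simp only [Set.mem_setOf_eq, hA]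
      refine forall₂_congr fun k hk => ?_
      rw [hqU ω j le_rfl, hqU ω k hk.le]
    by_cases hω : ω ∈ A
    · have h1 : ψ₁ (U ω) = Real.exp ((lam₂ - lam₁) * q (U ω) j) :=
        Set.indicator_of_mem (hmem.2 hω) _
      rw [hF, Set.indicator_of_mem hω, h1, hqU ω j le_rfl]
    · have h1 : ψ₁ (U ω) = 0 :=
        Set.indicator_of_notMem (fun hc => hω (hmem.1 hc)) _
      rw [hF, Set.indicator_of_notMem hω, h1]
  have hGV : ∀ ω, G ω = ψ₂ (V ω) := by
    intro ω
    have hmem : V ω ∈ {v : Fin m → ℝ | ∀ k ≤ m, 0 ≤ p v k} ↔ ω ∈ B := by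
      simp only [Set.mem_setOf_eq, hB]
      refine forall₂_congr fun k hk => ?_
      rw [hpV ω k hk]
    by_cases hω : ω ∈ B
    · have h1 : ψ₂ (V ω) = Real.exp (-lam₁ * p (V ω) m) :=
        Set.indicator_of_mem (hmem.2 hω) _
      rw [hG, Set.indicator_of_mem hω, h1, hpV ω m le_rfl]
    · have h1 : ψ₂ (V ω) = 0 :=
        Set.indicator_of_notMem (fun hc => hω (hmem.1 hc)) _
      rw [hG, Set.indicator_of_notMem hω, h1]
  -- independence
  have hFGindep : IndepFun F G μ := by
    have hdisj : Disjoint (Finset.range j) (Finset.Ico j n) := by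
      simp only [Finset.disjoint_left, Finset.mem_range, Finset.mem_Ico]
      omega
    have hbase := hindep.indepFun_finset (Finset.range j) (Finset.Ico j n) hdisj hmeas
    set r₁ : (↥(Finset.range j) → ℝ) → (Fin j → ℝ) :=
      fun w i => w ⟨(i : ℕ), Finset.mem_range.2 i.isLt⟩ with hr₁
    set r₂ : (↥(Finset.Ico j n) → ℝ) → (Fin m → ℝ) :=
      fun w i => w ⟨j + (i : ℕ), Finset.mem_Ico.2 ⟨Nat.le_add_right _ _, by omega⟩⟩ with hr₂
    have hr₁m : Measurable r₁ := measurable_pi_lambda _ fun i => measurable_pi_apply _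
    have hr₂m : Measurable r₂ := measurable_pi_lambda _ fun i => measurable_pi_apply _
    have h1 : IndepFun U V μ := hbase.comp hr₁m hr₂m
    have h2 := h1.comp hψ₁meas hψ₂meas
    have hFψ : F = ψ₁ ∘ U := funext hFU
    have hGψ : G = ψ₂ ∘ V := funext hGV
    rw [hFψ, hGψ]
    exact h2
  -- factorization
  have hmul : ∫ ω, F ω * G ω ∂μ = (∫ ω, F ω ∂μ) * ∫ ω, G ω ∂μ :=
    hFGindep.integral_fun_mul_eq_mul_integral hFmeas.aestronglyMeasurable hGmeas.aestronglyMeasurable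
  -- first factor
  have hFeq : ∫ ω, F ω ∂μ
      = ∫ ω in {ω | firstMin S j ω = j}, Real.exp ((lam₂ - lam₁) * S j ω) ∂μ := by
    have hset : {ω | firstMin S j ω = j} = A := by
      ext ω
      rw [Set.mem_setOf_eq, firstMin_self_iff]
      exact Iff.rfl
    rw [hF, integral_indicator hAmeas, hset]
  -- second factor
  have hB₀meas : MeasurableSet {ω | ∀ k ≤ m, 0 ≤ S k ω} := by
    have hB0' : {ω | ∀ k ≤ m, 0 ≤ S k ω}
        = ⋂ k ∈ Finset.range (m + 1), {ω | 0 ≤ S k ω} := by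
      ext ω; simp [Nat.lt_succ_iff]
    rw [hB0']
    exact Finset.measurableSet_biInter _ fun k _ =>
      measurableSet_le measurable_const (hSm k)
  have hVmeas : Measurable V := measurable_pi_lambda _ fun i => hmeas _
  have hV0meas : Measurable (fun ω (i : Fin m) => X i ω) :=
    measurable_pi_lambda _ fun i => hmeas _
  have hGeq : ∫ ω, G ω ∂μ
      = ∫ ω in {ω | ∀ k ≤ m, 0 ≤ S k ω}, Real.exp (-lam₁ * S m ω) ∂μ := by
    calc ∫ ω, G ω ∂μ = ∫ ω, ψ₂ (V ω) ∂μ :=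
          integral_congr_ae (Filter.Eventually.of_forall hGV)
      _ = ∫ v, ψ₂ v ∂(μ.map V) :=
          (integral_map hVmeas.aemeasurable hψ₂meas.aestronglyMeasurable).symm
      _ = ∫ v, ψ₂ v ∂(μ.map (fun ω (i : Fin m) => X i ω)) := by
          rw [hV, map_shift_eq X hmeas hindep hident m j]
      _ = ∫ ω, ψ₂ (fun i : Fin m => X i ω) ∂μ :=
          integral_map hV0meas.aemeasurable hψ₂meas.aestronglyMeasurable
      _ = ∫ ω, ({ω : Ω | ∀ k ≤ m, 0 ≤ S k ω}.indicator
            (fun ω => Real.exp (-lam₁ * S m ω))) ω ∂μ := by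
          refine integral_congr_ae (Filter.Eventually.of_forall fun ω => ?_)
          show ψ₂ (fun i : Fin m => X i ω)
            = ({ω : Ω | ∀ k ≤ m, 0 ≤ S k ω}.indicator (fun ω => Real.exp (-lam₁ * S m ω))) ω
          have hmem : (fun i : Fin m => X i ω) ∈ {v : Fin m → ℝ | ∀ k ≤ m, 0 ≤ p v k}
              ↔ ω ∈ {ω : Ω | ∀ k ≤ m, 0 ≤ S k ω} := by
            simp only [Set.mem_setOf_eq]
            refine forall₂_congr fun k hk => ?_
            rw [hpV0 ω k hk]
          by_cases hω : ω ∈ {ω : Ω | ∀ k ≤ m, 0 ≤ S k ω}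
          · have h1 : ψ₂ (fun i : Fin m => X i ω)
                = Real.exp (-lam₁ * p (fun i : Fin m => X i ω) m) :=
              Set.indicator_of_mem (hmem.2 hω) _
            rw [h1, Set.indicator_of_mem hω, hpV0 ω m le_rfl]
          · have h1 : ψ₂ (fun i : Fin m => X i ω) = 0 :=
              Set.indicator_of_notMem (fun hc => hω (hmem.1 hc)) _
            rw [h1, Set.indicator_of_notMem hω]
      _ = ∫ ω in {ω | ∀ k ≤ m, 0 ≤ S k ω}, Real.exp (-lam₁ * S m ω) ∂μ :=
          integral_indicator hB₀meas
  -- assemble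
  refine step1.trans ?_
  rw [integral_const_mul, hmul, hFeq, hGeq]
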